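/- (Rigidity of the zero driver from hitting times.) Let $\xi : [0,T] \to \mathbb{R}$ be a continuous driver whose hitting-time function satisfies $\tau(x; \xi) = x^2/4$ for all $x$ in an interval $[-y_0, y_0]$ (with $y_0^2/4 \leq T$). Then $\xi(t) = 0$ for all $0 \leq t \leq y_0^2/4$. -/

import Mathlib

open Set

/-- Sign constancy of a continuous nonvanishing function on `[0, c)`. -/
lemma aux_sign16 {f : ℝ → ℝ} {c : ℝ} (hc : ContinuousOn f (Set.Icc 0 c))
    (hne : ∀ t ∈ Set.Ico 0 c, f t ≠ 0) :
    (∀ t ∈ Set.Ico 0 c, 0 < f t) ∨ (∀ t ∈ Set.Ico 0 c, f t < 0) := by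
  by_contra h
  push_neg at h
  obtain ⟨⟨t₁, ht₁, hf₁⟩, ⟨t₂, ht₂, hf₂⟩⟩ := h
  have hf₁' : f t₁ < 0 := lt_of_le_of_ne hf₁ (hne t₁ ht₁)
  have hf₂' : 0 < f t₂ := lt_of_le_of_ne hf₂ (Ne.symm (hne t₂ ht₂))
  rcases le_total t₁ t₂ with hle | hle
  · obtain ⟨t, ht, hft⟩ := intermediate_value_Icc hle
      (hc.mono (Set.Icc_subset_Icc ht₁.1 ht₂.2.le)) ⟨hf₁'.le, hf₂'.le⟩
    exact hne t ⟨le_trans ht₁.1 ht.1, lt_of_le_of_lt ht.2 ht₂.2⟩ hft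
  · obtain ⟨t, ht, hft⟩ := intermediate_value_Icc' hle
      (hc.mono (Set.Icc_subset_Icc ht₂.1 ht₁.2.le)) ⟨hf₁'.le, hf₂'.le⟩
    exact hne t ⟨le_trans ht₂.1 ht.1, lt_of_le_of_lt ht.2 ht₁.2⟩ hft

/-- A continuous function on `[0,c]` with zero derivative on `(0,c)` is constant. -/
lemma aux_const16 {f : ℝ → ℝ} {c : ℝ} (hc : ContinuousOn f (Set.Icc 0 c))
    (hd : ∀ t ∈ Set.Ioo (0:ℝ) c, HasDerivAt f 0 t) :
    ∀ t ∈ Set.Icc (0:ℝ) c, f t = f 0 := by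
  have hdiff : DifferentiableOn ℝ f (interior (Set.Icc (0:ℝ) c)) := by
    rw [interior_Icc]
    exact fun t ht => (hd t ht).differentiableAt.differentiableWithinAt
  have h1 : MonotoneOn f (Set.Icc (0:ℝ) c) := by
    refine monotoneOn_of_deriv_nonneg (convex_Icc 0 c) hc hdiff ?_
    rw [interior_Icc]
    intro t ht
    rw [(hd t ht).deriv]
  have h2 : AntitoneOn f (Set.Icc (0:ℝ) c) := by
    refine antitoneOn_of_deriv_nonpos (convex_Icc 0 c) hc hdiff ?_
    rw [interior_Icc]
    intro t ht
    rw [(hd t ht).deriv]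
  intro t ht
  have h0c : (0:ℝ) ∈ Set.Icc (0:ℝ) c := ⟨le_refl 0, ht.1.trans ht.2⟩
  exact le_antisymm (h2 h0c ht ht.1) (h1 h0c ht ht.1)

/-- If `g` satisfies `g' = 2 g / D` with `D > 0`, starts positive and ends at zero, contradiction. -/
lemma aux_nozero16 {g D : ℝ → ℝ} {c : ℝ} (hc0 : 0 < c)
    (hgc : ContinuousOn g (Set.Icc 0 c))
    (hg0 : 0 < g 0) (hgτ : g c = 0)
    (hD : ∀ t ∈ Set.Ico (0:ℝ) c, 0 < D t)
    (hd : ∀ t ∈ Set.Ioo (0:ℝ) c, HasDerivAt g (2 * g t / D t) t) : False := by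
  set S := Set.Icc (0:ℝ) c ∩ g ⁻¹' {0} with hSdef
  have hSne : S.Nonempty := ⟨c, ⟨hc0.le, le_refl c⟩, hgτ⟩
  have hScl : IsClosed S := hgc.preimage_isClosed_of_isClosed isClosed_Icc isClosed_singleton
  have hSbdd : BddBelow S := ⟨0, fun x hx => hx.1.1⟩
  set t₁ := sInf S with ht₁def
  have ht₁S : t₁ ∈ S := hScl.csInf_mem hSne hSbdd
  have hgt₁ : g t₁ = 0 := ht₁S.2
  have ht₁pos : 0 < t₁ := by
    rcases lt_or_eq_of_le ht₁S.1.1 with h | h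
    · exact h
    · exfalso; rw [← h] at hgt₁; linarith
  have ht₁c : t₁ ≤ c := ht₁S.1.2
  have hne : ∀ t ∈ Set.Ico (0:ℝ) t₁, g t ≠ 0 := by
    intro t ht hgt
    have : t₁ ≤ t := csInf_le hSbdd ⟨⟨ht.1, ht.2.le.trans ht₁c⟩, hgt⟩
    exact absurd this (not_le.mpr ht.2)
  have hgc' : ContinuousOn g (Set.Icc 0 t₁) := hgc.mono (Set.Icc_subset_Icc le_rfl ht₁c)
  have hpos : ∀ t ∈ Set.Ico (0:ℝ) t₁, 0 < g t := by
    rcases aux_sign16 hgc' hne with h | h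
    · exact h
    · exfalso
      have := h 0 ⟨le_refl 0, ht₁pos⟩
      linarith
  have hmono : MonotoneOn g (Set.Icc (0:ℝ) t₁) := by
    refine monotoneOn_of_deriv_nonneg (convex_Icc 0 t₁) hgc' ?_ ?_
    · rw [interior_Icc]
      intro t ht
      exact (hd t ⟨ht.1, lt_of_lt_of_le ht.2 ht₁c⟩).differentiableAt.differentiableWithinAt
    · rw [interior_Icc]
      intro t ht
      rw [(hd t ⟨ht.1, lt_of_lt_of_le ht.2 ht₁c⟩).deriv]
      have h1 := hpos t ⟨ht.1.le, ht.2⟩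
      have h2 := hD t ⟨ht.1.le, lt_of_lt_of_le ht.2 ht₁c⟩
      positivity
  have : g 0 ≤ g t₁ := hmono ⟨le_refl 0, ht₁pos.le⟩ ⟨ht₁pos.le, le_refl t₁⟩ ht₁pos.le
  rw [hgt₁] at this
  linarith

theorem statement16 (T y₀ : ℝ) (hy₀ : 0 < y₀) (hT : y₀ ^ 2 / 4 ≤ T)
    (ξ : ℝ → ℝ) (hξ : ContinuousOn ξ (Set.Icc 0 T))
    (u : ℝ → ℝ → ℝ)
    (hu0 : ∀ x ∈ Set.Icc (-y₀) y₀, x ≠ 0 → u x 0 = x)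
    (hode : ∀ x ∈ Set.Icc (-y₀) y₀, x ≠ 0 → ∀ t ∈ Set.Ico (0:ℝ) (x ^ 2 / 4),
        HasDerivWithinAt (u x) (-2 / (u x t - ξ t)) (Set.Ici 0) t)
    (hgap : ∀ x ∈ Set.Icc (-y₀) y₀, x ≠ 0 → ∀ t ∈ Set.Ico (0:ℝ) (x ^ 2 / 4),
        u x t ≠ ξ t)
    (hcont : ∀ x ∈ Set.Icc (-y₀) y₀, x ≠ 0 → ContinuousOn (u x) (Set.Icc 0 (x ^ 2 / 4)))
    (hhit : ∀ x ∈ Set.Icc (-y₀) y₀, x ≠ 0 → u x (x ^ 2 / 4) = ξ (x ^ 2 / 4)) :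
    ∀ t ∈ Set.Icc (0:ℝ) (y₀ ^ 2 / 4), ξ t = 0 := by
  set τ := y₀ ^ 2 / 4 with hτdef
  have hτpos : 0 < τ := by positivity
  have hmem : y₀ ∈ Set.Icc (-y₀) y₀ := ⟨neg_le_self hy₀.le, le_refl y₀⟩
  have hmem' : -y₀ ∈ Set.Icc (-y₀) y₀ := ⟨le_refl _, neg_le_self hy₀.le⟩
  have hne : y₀ ≠ 0 := ne_of_gt hy₀
  have hne' : -y₀ ≠ 0 := neg_ne_zero.mpr hne
  have hsq : (-y₀) ^ 2 / 4 = τ := by rw [hτdef]; ring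
  set a := u y₀ with ha
  set b := u (-y₀) with hb
  have ha0 : a 0 = y₀ := hu0 y₀ hmem hne
  have hb0 : b 0 = -y₀ := hu0 (-y₀) hmem' hne'
  have hξc : ContinuousOn ξ (Set.Icc 0 τ) := hξ.mono (Set.Icc_subset_Icc le_rfl hT)
  have hac : ContinuousOn a (Set.Icc 0 τ) := hcont y₀ hmem hne
  have hbc : ContinuousOn b (Set.Icc 0 τ) := by
    have h := hcont (-y₀) hmem' hne'; rwa [hsq] at h
  have hagap : ∀ t ∈ Set.Ico (0:ℝ) τ, a t ≠ ξ t := hgap y₀ hmem hne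
  have hbgap : ∀ t ∈ Set.Ico (0:ℝ) τ, b t ≠ ξ t := by
    have h := hgap (-y₀) hmem' hne'; rwa [hsq] at h
  have hahit : a τ = ξ τ := hhit y₀ hmem hne
  have hbhit : b τ = ξ τ := by
    have h := hhit (-y₀) hmem' hne'; rwa [hsq] at h
  have hada : ∀ t ∈ Set.Ioo (0:ℝ) τ, HasDerivAt a (-2 / (a t - ξ t)) t := by
    intro t ht
    exact (hode y₀ hmem hne t ⟨ht.1.le, ht.2⟩).hasDerivAt (Ici_mem_nhds ht.1)
  have hbda : ∀ t ∈ Set.Ioo (0:ℝ) τ, HasDerivAt b (-2 / (b t - ξ t)) t := by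
    intro t ht
    have h := hode (-y₀) hmem' hne'
    rw [hsq] at h
    exact (h t ⟨ht.1.le, ht.2⟩).hasDerivAt (Ici_mem_nhds ht.1)
  -- sign constancy
  have hsigna := aux_sign16 (hac.sub hξc)
    (fun t ht => sub_ne_zero_of_ne (hagap t ht))
  have hsignb := aux_sign16 (hbc.sub hξc)
    (fun t ht => sub_ne_zero_of_ne (hbgap t ht))
  -- derivative of a - b
  have hgd : ∀ t ∈ Set.Ioo (0:ℝ) τ,
      HasDerivAt (fun t => a t - b t)
        (2 * (a t - b t) / ((a t - ξ t) * (b t - ξ t))) t := by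
    intro t ht
    have h := (hada t ht).sub (hbda t ht)
    refine h.congr_deriv (Eq.symm ?_)
    have hPne : a t - ξ t ≠ 0 := sub_ne_zero_of_ne (hagap t ⟨ht.1.le, ht.2⟩)
    have hQne : b t - ξ t ≠ 0 := sub_ne_zero_of_ne (hbgap t ⟨ht.1.le, ht.2⟩)
    rw [div_sub_div _ _ hPne hQne]
    ring
  have hgcont : ContinuousOn (fun t => a t - b t) (Set.Icc 0 τ) := hac.sub hbc
  have hg0 : (0:ℝ) < a 0 - b 0 := by rw [ha0, hb0]; linarith
  have hgτ : a τ - b τ = 0 := by rw [hahit, hbhit]; ring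
  -- eliminate same-sign cases
  rcases hsigna with hA | hA <;> rcases hsignb with hB | hB
  · -- a > ξ, b > ξ : impossible
    exact absurd (aux_nozero16 hτpos hgcont hg0 hgτ
      (fun t ht => mul_pos (hA t ht) (hB t ht)) hgd) (fun h => h)
  case inl.inr =>
    -- MAIN CASE: a > ξ > b
    have hP : ∀ t ∈ Set.Ico (0:ℝ) τ, 0 < a t - ξ t := hA
    have hQ : ∀ t ∈ Set.Ico (0:ℝ) τ, b t - ξ t < 0 := hB
    set φ := fun t => (a t - b t) ^ 2 + 16 * t with hφdef
    have hφc : ContinuousOn φ (Set.Icc 0 τ) :=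
      ((hac.sub hbc).pow 2).add (continuousOn_const.mul continuousOn_id)
    have hφd : ∀ t ∈ Set.Ioo (0:ℝ) τ,
        HasDerivAt φ
          (2 * (a t - b t) * (-2 / (a t - ξ t) - -2 / (b t - ξ t)) + 16) t := by
      intro t ht
      have h1 := ((hada t ht).sub (hbda t ht)).pow 2
      have h2 : HasDerivAt (fun t : ℝ => 16 * t) (16 * 1) t := (hasDerivAt_id t).const_mul 16
      have h := h1.add h2
      refine h.congr_deriv (Eq.symm ?_)
      push_cast [Pi.sub_apply]
      ring
    have hkey : ∀ t ∈ Set.Ioo (0:ℝ) τ,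
        2 * (a t - b t) * (-2 / (a t - ξ t) - -2 / (b t - ξ t)) + 16
          = 4 * ((a t - ξ t) + (b t - ξ t)) ^ 2 / ((a t - ξ t) * (b t - ξ t)) := by
      intro t ht
      have hPne : a t - ξ t ≠ 0 := (hP t ⟨ht.1.le, ht.2⟩).ne'
      have hQne : b t - ξ t ≠ 0 := (hQ t ⟨ht.1.le, ht.2⟩).ne
      field_simp
      ring
    have hφanti : AntitoneOn φ (Set.Icc 0 τ) := by
      refine antitoneOn_of_deriv_nonpos (convex_Icc 0 τ) hφc ?_ ?_
      · rw [interior_Icc]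
        exact fun t ht => (hφd t ht).differentiableAt.differentiableWithinAt
      · rw [interior_Icc]
        intro t ht
        rw [(hφd t ht).deriv, hkey t ht]
        have hPp := hP t ⟨ht.1.le, ht.2⟩
        have hQn := hQ t ⟨ht.1.le, ht.2⟩
        have hden : (a t - ξ t) * (b t - ξ t) < 0 := mul_neg_of_pos_of_neg hPp hQn
        exact div_nonpos_of_nonneg_of_nonpos (by positivity) hden.le
    have hφ0 : φ 0 = 4 * y₀ ^ 2 := by
      simp only [hφdef, ha0, hb0]
      ring
    have hφτ : φ τ = 4 * y₀ ^ 2 := by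
      show (a τ - b τ) ^ 2 + 16 * τ = 4 * y₀ ^ 2
      rw [hgτ, hτdef]
      ring
    have hφconst : ∀ t ∈ Set.Icc (0:ℝ) τ, φ t = 4 * y₀ ^ 2 := by
      intro t ht
      have h1 : φ t ≤ φ 0 := hφanti ⟨le_refl 0, hτpos.le⟩ ht ht.1
      have h2 : φ τ ≤ φ t := hφanti ht ⟨hτpos.le, le_refl τ⟩ ht.2
      rw [hφ0] at h1
      rw [hφτ] at h2
      linarith
    -- equality case: ξ = (a+b)/2 on the interior
    have hmid : ∀ t ∈ Set.Ioo (0:ℝ) τ, (a t - ξ t) + (b t - ξ t) = 0 := by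
      intro t ht
      have hEE : φ =ᶠ[nhds t] fun _ => 4 * y₀ ^ 2 :=
        Filter.eventuallyEq_of_mem (Ioo_mem_nhds ht.1 ht.2)
          (fun s hs => hφconst s (Set.Ioo_subset_Icc_self hs))
      have hphi0 : HasDerivAt φ 0 t :=
        (hasDerivAt_const t (4 * y₀ ^ 2)).congr_of_eventuallyEq hEE
      have huniq := (hφd t ht).unique hphi0
      rw [hkey t ht] at huniq
      have hPp := hP t ⟨ht.1.le, ht.2⟩
      have hQn := hQ t ⟨ht.1.le, ht.2⟩
      have hdenne : (a t - ξ t) * (b t - ξ t) ≠ 0 := (mul_neg_of_pos_of_neg hPp hQn).ne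
      have hnum : 4 * ((a t - ξ t) + (b t - ξ t)) ^ 2 = 0 := by
        exact (div_eq_zero_iff.mp huniq).resolve_right hdenne
      nlinarith [sq_nonneg ((a t - ξ t) + (b t - ξ t))]
    -- a + b has zero derivative, hence constant 0
    have hsd : ∀ t ∈ Set.Ioo (0:ℝ) τ, HasDerivAt (fun t => a t + b t) 0 t := by
      intro t ht
      have h := (hada t ht).add (hbda t ht)
      have hPp := hP t ⟨ht.1.le, ht.2⟩
      have hQrel : b t - ξ t = -(a t - ξ t) := by
        have := hmid t ht; linarith
      have : -2 / (a t - ξ t) + -2 / (b t - ξ t) = 0 := by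
        rw [hQrel, div_neg]
        ring
      rwa [this] at h
    have hsconst : ∀ t ∈ Set.Icc (0:ℝ) τ, a t + b t = a 0 + b 0 :=
      aux_const16 (hac.add hbc) hsd
    have hs0 : a 0 + b 0 = 0 := by rw [ha0, hb0]; ring
    have hξzero : ∀ t ∈ Set.Ioo (0:ℝ) τ, ξ t = 0 := by
      intro t ht
      have h1 := hmid t ht
      have h2 := hsconst t ⟨ht.1.le, ht.2.le⟩
      rw [hs0] at h2
      linarith
    -- conclude on all of [0, τ]
    intro t ht
    rcases eq_or_lt_of_le ht.1 with h0 | h0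
    · -- t = 0 : use continuity of ξ
      have hcw : ContinuousWithinAt ξ (Set.Ioo (0:ℝ) τ) 0 :=
        (hξc 0 ⟨le_refl 0, hτpos.le⟩).mono Set.Ioo_subset_Icc_self
      have hnb : (nhdsWithin (0:ℝ) (Set.Ioo (0:ℝ) τ)).NeBot := by
        rw [← mem_closure_iff_nhdsWithin_neBot, closure_Ioo hτpos.ne]
        exact ⟨le_refl 0, hτpos.le⟩
      have h2 : Filter.Tendsto ξ (nhdsWithin (0:ℝ) (Set.Ioo (0:ℝ) τ)) (nhds 0) := by
        refine Filter.Tendsto.congr' ?_ tendsto_const_nhds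
        filter_upwards [eventually_mem_nhdsWithin] with s hs
        exact (hξzero s hs).symm
      have := tendsto_nhds_unique hcw h2
      rw [← h0, this]
    · rcases eq_or_lt_of_le ht.2 with hτ' | hτ'
      · -- t = τ
        have h2 := hsconst τ ⟨hτpos.le, le_refl τ⟩
        rw [hs0, hahit, hbhit] at h2
        rw [hτ']
        linarith
      · exact hξzero t ⟨h0, hτ'⟩
  · -- a < ξ, b > ξ : contradiction at t = 0
    have h1 := hA 0 ⟨le_refl 0, hτpos⟩
    have h2 := hB 0 ⟨le_refl 0, hτpos⟩
    rw [Pi.sub_apply, ha0] at h1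
    rw [Pi.sub_apply, hb0] at h2
    exfalso
    linarith
  · -- a < ξ, b < ξ : impossible
    exact absurd (aux_nozero16 hτpos hgcont hg0 hgτ
      (fun t ht => mul_pos_of_neg_of_neg (hA t ht) (hB t ht)) hgd) (fun h => h)
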